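/- arXiv:2507.09156 — 4 statements merged into one kernel-verified Lean document; each statement's English description precedes it below -/
import Mathlib

section
/- Let F and G be distributions on ℝ^p with finite first moments, with X, X' i.i.d. from G and Y, Y' i.i.d. from F. Then the energy distance E(F,G) = 2·E‖X−Y‖₂ − E‖Y−Y'‖₂ − E‖X−X'‖₂ is nonnegative. -/
open MeasureTheory Set
open scoped RealInnerProductSpace

variable {p : ℕ}

noncomputable def ED.u (a t : ℝ) : ENNReal := if a ≤ t then 1 else 0
noncomputable def ED.v (a t : ℝ) : ENNReal := if t < a then 1 else 0

lemma ED.abs_eq (a b : ℝ) :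
    ENNReal.ofReal |a - b| = ∫⁻ t, ED.u a t * ED.v b t + ED.u b t * ED.v a t := by
  have h : ∀ t, ED.u a t * ED.v b t + ED.u b t * ED.v a t
      = (Set.Ico (min a b) (max a b)).indicator (1 : ℝ → ENNReal) t := by
    intro t
    rcases le_or_gt a t with h1 | h1 <;> rcases le_or_gt b t with h2 | h2 <;>
      simp_all [ED.u, ED.v, Set.indicator_apply, Set.mem_Ico, min_le_iff, lt_max_iff,
        not_le_of_gt, not_lt_of_ge, le_of_lt]
  calc ENNReal.ofReal |a - b|
      = volume (Set.Ico (min a b) (max a b)) := by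
        rw [Real.volume_Ico, max_sub_min_eq_abs, abs_sub_comm]
    _ = ∫⁻ t, (Set.Ico (min a b) (max a b)).indicator (1 : ℝ → ENNReal) t := by
        rw [lintegral_indicator_one measurableSet_Ico]
    _ = _ := by rw [funext h]

lemma ED.measurable_u : Measurable (fun q : ℝ × ℝ => ED.u q.1 q.2) := by
  unfold ED.u
  exact Measurable.ite (measurableSet_le measurable_fst measurable_snd)
    measurable_const measurable_const

lemma ED.measurable_v : Measurable (fun q : ℝ × ℝ => ED.v q.1 q.2) := by
  unfold ED.v
  exact Measurable.ite (measurableSet_lt measurable_snd measurable_fst)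
    measurable_const measurable_const

lemma ED.lint_u (μ : Measure ℝ) (t : ℝ) : ∫⁻ a, ED.u a t ∂μ = μ (Iic t) := by
  have : ∀ a, ED.u a t = (Iic t).indicator (1 : ℝ → ENNReal) a := by
    intro a; simp [ED.u, Set.indicator_apply, Set.mem_Iic]
  rw [funext this, lintegral_indicator_one measurableSet_Iic]

lemma ED.lint_v (μ : Measure ℝ) (t : ℝ) : ∫⁻ a, ED.v a t ∂μ = μ (Ioi t) := by
  have : ∀ a, ED.v a t = (Ioi t).indicator (1 : ℝ → ENNReal) a := by
    intro a; simp [ED.v, Set.indicator_apply, Set.mem_Ioi]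
  rw [funext this, lintegral_indicator_one measurableSet_Ioi]

lemma ED.mu_u (a : ℝ) : Measurable (ED.u a) :=
  ED.measurable_u.comp (measurable_const.prodMk measurable_id)
lemma ED.mu_u' (t : ℝ) : Measurable (fun a => ED.u a t) :=
  ED.measurable_u.comp (measurable_id.prodMk measurable_const)
lemma ED.mu_v (a : ℝ) : Measurable (ED.v a) :=
  ED.measurable_v.comp (measurable_const.prodMk measurable_id)
lemma ED.mu_v' (t : ℝ) : Measurable (fun a => ED.v a t) :=
  ED.measurable_v.comp (measurable_id.prodMk measurable_const)

lemma ED.meas_Iic (ν : Measure ℝ) : Measurable (fun t => ν (Iic t)) := by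
  apply Monotone.measurable
  intro s t hst
  exact measure_mono (Iic_subset_Iic.2 hst)

lemma ED.meas_Ioi (ν : Measure ℝ) : Measurable (fun t => ν (Ioi t)) := by
  apply Antitone.measurable
  intro s t hst
  exact measure_mono (Ioi_subset_Ioi hst)

lemma ED.N_eq (μ ν : Measure ℝ) [SFinite μ] [SFinite ν] :
    ∫⁻ a, ∫⁻ b, ENNReal.ofReal |a - b| ∂ν ∂μ
      = ∫⁻ t, μ (Iic t) * ν (Ioi t) + ν (Iic t) * μ (Ioi t) := by
  have step1 : ∀ a : ℝ, ∫⁻ b, ENNReal.ofReal |a - b| ∂ν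
      = ∫⁻ t, ED.u a t * ν (Ioi t) + ν (Iic t) * ED.v a t := by
    intro a
    have : ∫⁻ b, ENNReal.ofReal |a - b| ∂ν
        = ∫⁻ b, ∫⁻ t, ED.u a t * ED.v b t + ED.u b t * ED.v a t ∂volume ∂ν := by
      simp_rw [ED.abs_eq]
    rw [this, lintegral_lintegral_swap]
    · apply lintegral_congr
      intro t
      rw [lintegral_add_left ((ED.mu_v' t).const_mul (ED.u a t)),
        lintegral_const_mul _ (ED.mu_v' t), lintegral_mul_const _ (ED.mu_u' t),
        ED.lint_u, ED.lint_v]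
    · apply Measurable.aemeasurable
      exact ((ED.mu_u a).comp measurable_snd |>.mul
          (ED.measurable_v.comp (measurable_fst.prodMk measurable_snd))).add
        ((ED.measurable_u.comp (measurable_fst.prodMk measurable_snd)).mul
          ((ED.mu_v a).comp measurable_snd))
  simp_rw [step1]
  rw [lintegral_lintegral_swap]
  · apply lintegral_congr
    intro t
    rw [lintegral_add_left (((ED.mu_u' t).mul_const _ : _)),
      lintegral_mul_const _ (ED.mu_u' t), lintegral_const_mul _ (ED.mu_v' t),
      ED.lint_u, ED.lint_v]
  · apply Measurable.aemeasurable
    exact ((ED.measurable_u.comp (measurable_fst.prodMk measurable_snd)).mul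
        ((ED.meas_Ioi ν).comp measurable_snd)).add
      (((ED.meas_Iic ν).comp measurable_snd).mul
        (ED.measurable_v.comp (measurable_fst.prodMk measurable_snd)))

lemma ED.key_ineq {x y : ENNReal} (hx : x ≤ 1) (hy : y ≤ 1) :
    x * (1 - x) + y * (1 - y) ≤ x * (1 - y) + y * (1 - x) := by
  wlog h : x ≤ y generalizing x y
  · rw [add_comm (x * (1 - x)), add_comm (x * (1 - y))]
    exact this hy hx (le_of_not_ge h)
  have h1 : (1:ENNReal) - x = (1 - y) + (y - x) := (tsub_add_tsub_cancel hy h).symm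
  rw [h1, mul_add, mul_add]
  rw [add_right_comm, ← add_assoc]
  exact add_le_add_right (mul_le_mul_left h _) _

lemma ED.oneD (μ ν : Measure ℝ) [IsProbabilityMeasure μ] [IsProbabilityMeasure ν] :
    (∫⁻ a, ∫⁻ b, ENNReal.ofReal |a - b| ∂μ ∂μ)
      + ∫⁻ a, ∫⁻ b, ENNReal.ofReal |a - b| ∂ν ∂ν
      ≤ 2 * ∫⁻ a, ∫⁻ b, ENNReal.ofReal |a - b| ∂ν ∂μ := by
  rw [ED.N_eq μ μ, ED.N_eq ν ν, ED.N_eq μ ν]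
  have hm : ∀ κ l : Measure ℝ, Measurable
      (fun t => κ (Iic t) * l (Ioi t) + l (Iic t) * κ (Ioi t)) := fun κ l =>
    ((ED.meas_Iic κ).mul (ED.meas_Ioi l)).add ((ED.meas_Iic l).mul (ED.meas_Ioi κ))
  rw [← lintegral_add_left (hm μ μ), ← lintegral_const_mul _ (hm μ ν)]
  apply lintegral_mono
  intro t
  have hμ : μ (Ioi t) = 1 - μ (Iic t) := by
    rw [← Set.compl_Iic, prob_compl_eq_one_sub measurableSet_Iic]
  have hν : ν (Ioi t) = 1 - ν (Iic t) := by
    rw [← Set.compl_Iic, prob_compl_eq_one_sub measurableSet_Iic]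
  simp only []
  show μ (Iic t) * μ (Ioi t) + μ (Iic t) * μ (Ioi t) + (ν (Iic t) * ν (Ioi t) + ν (Iic t) * ν (Ioi t)) ≤ 2 * (μ (Iic t) * ν (Ioi t) + ν (Iic t) * μ (Ioi t))
  rw [hμ, hν]
  set x := μ (Iic t)
  set y := ν (Iic t)
  have hx : x ≤ 1 := prob_le_one
  have hy : y ≤ 1 := prob_le_one
  have h := ED.key_ineq hx hy
  calc x * (1 - x) + x * (1 - x) + (y * (1 - y) + y * (1 - y))
      = 2 * (x * (1 - x) + y * (1 - y)) := by ring
    _ ≤ 2 * (x * (1 - y) + y * (1 - x)) := mul_le_mul_right h 2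

lemma ED.c_homog {p : ℕ} (u z : EuclideanSpace ℝ (Fin p)) (hu : ‖u‖ = 1) :
    ∫⁻ w in Metric.closedBall (0 : EuclideanSpace ℝ (Fin p)) 1, ENNReal.ofReal |⟪w, z⟫|
      = ENNReal.ofReal ‖z‖
        * ∫⁻ w in Metric.closedBall (0 : EuclideanSpace ℝ (Fin p)) 1,
            ENNReal.ofReal |⟪w, u⟫| := by
  by_cases hz : z = 0
  · simp [hz]
  · set z' : EuclideanSpace ℝ (Fin p) := ‖z‖⁻¹ • z with hz'
    have hznorm : ‖z‖ ≠ 0 := norm_ne_zero_iff.2 hz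
    have hz'norm : ‖z'‖ = 1 := by
      rw [hz', norm_smul, norm_inv, norm_norm, inv_mul_cancel₀ hznorm]
    set R : EuclideanSpace ℝ (Fin p) ≃ₗᵢ[ℝ] EuclideanSpace ℝ (Fin p) :=
      Submodule.reflection (ℝ ∙ (u - z'))ᗮ with hRdef
    have hR : R u = z' := Submodule.reflection_sub (by rw [hu, hz'norm])
    have hRz : R (‖z‖ • u) = z := by
      rw [LinearIsometryEquiv.map_smul, hR, hz', smul_smul, mul_inv_cancel₀ hznorm, one_smul]
    have hpre : R ⁻¹' Metric.closedBall 0 1 = Metric.closedBall 0 1 := by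
      ext w
      simp [Metric.mem_closedBall, dist_eq_norm, R.norm_map]
    have hcv := (R.measurePreserving).setLIntegral_comp_preimage_emb
      (R.toHomeomorph.measurableEmbedding)
      (fun w => ENNReal.ofReal |⟪w, z⟫|) (Metric.closedBall 0 1)
    rw [hpre] at hcv
    rw [← hcv]
    have : ∀ w, ENNReal.ofReal |⟪R w, z⟫|
        = ENNReal.ofReal ‖z‖ * ENNReal.ofReal |⟪w, u⟫| := by
      intro w
      have h1 : ⟪R w, z⟫ = ‖z‖ * ⟪w, u⟫ := by
        conv_lhs => rw [← hRz]
        rw [LinearIsometryEquiv.inner_map_map, real_inner_smul_right]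
      rw [h1, abs_mul, abs_of_nonneg (norm_nonneg z), ENNReal.ofReal_mul (norm_nonneg z)]
    simp_rw [this]
    rw [lintegral_const_mul' _ _ ENNReal.ofReal_ne_top]

lemma ED.cont_inner {p : ℕ} (u : EuclideanSpace ℝ (Fin p)) :
    Continuous fun w : EuclideanSpace ℝ (Fin p) => ⟪w, u⟫ :=
  continuous_id.inner continuous_const

lemma ED.c0_ne_top {p : ℕ} (u : EuclideanSpace ℝ (Fin p)) (hu : ‖u‖ = 1) :
    (∫⁻ w in Metric.closedBall (0 : EuclideanSpace ℝ (Fin p)) 1,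
      ENNReal.ofReal |⟪w, u⟫|) ≠ ⊤ := by
  have hle : ∫⁻ w in Metric.closedBall (0 : EuclideanSpace ℝ (Fin p)) 1,
      ENNReal.ofReal |⟪w, u⟫| ≤ ∫⁻ _ in Metric.closedBall (0 : EuclideanSpace ℝ (Fin p)) 1,
        (1 : ENNReal) := by
    apply setLIntegral_mono measurable_const
    intro w hw
    apply ENNReal.ofReal_le_one.2
    calc |⟪w, u⟫| ≤ ‖w‖ * ‖u‖ := abs_real_inner_le_norm w u
      _ ≤ 1 := by
        rw [hu, mul_one]
        simpa [dist_eq_norm] using hw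
  refine ne_top_of_le_ne_top ?_ hle
  rw [setLIntegral_one]
  exact (measure_closedBall_lt_top).ne

lemma ED.c0_ne_zero {p : ℕ} (u : EuclideanSpace ℝ (Fin p)) (hu : ‖u‖ = 1) :
    (∫⁻ w in Metric.closedBall (0 : EuclideanSpace ℝ (Fin p)) 1,
      ENNReal.ofReal |⟪w, u⟫|) ≠ 0 := by
  have hu0 : u ≠ 0 := by intro h; rw [h, norm_zero] at hu; norm_num at hu
  have hS : ((ℝ ∙ u)ᗮ : Submodule ℝ (EuclideanSpace ℝ (Fin p))) ≠ ⊤ := by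
    intro h
    have : u ∈ ((ℝ ∙ u)ᗮ : Submodule ℝ (EuclideanSpace ℝ (Fin p))) := h ▸ Submodule.mem_top
    have := Submodule.mem_orthogonal_singleton_iff_inner_right.1 this
    exact hu0 (inner_self_eq_zero.1 this)
  have hS0 : volume (((ℝ ∙ u)ᗮ : Submodule ℝ (EuclideanSpace ℝ (Fin p))) : Set (EuclideanSpace ℝ (Fin p))) = 0 :=
    by simpa using Measure.addHaar_submodule volume _ hS
  have hmeas : Measurable fun w : EuclideanSpace ℝ (Fin p) => ENNReal.ofReal |⟪w, u⟫| :=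
    ENNReal.measurable_ofReal.comp (continuous_abs.comp (ED.cont_inner u)).measurable
  rw [← pos_iff_ne_zero, lintegral_pos_iff_support hmeas]
  have hsub : Metric.closedBall (0 : EuclideanSpace ℝ (Fin p)) 1 \
      (((ℝ ∙ u)ᗮ : Submodule ℝ (EuclideanSpace ℝ (Fin p))) : Set _)
      ⊆ Function.support fun w => ENNReal.ofReal |⟪w, u⟫| := by
    intro w hw
    simp only [Function.mem_support, ne_eq, ENNReal.ofReal_eq_zero, not_le, abs_pos]
    intro h
    exact hw.2 (Submodule.mem_orthogonal_singleton_iff_inner_right.2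
      (by rw [real_inner_comm]; exact h))
  calc (0 : ENNReal)
      < volume (Metric.closedBall (0 : EuclideanSpace ℝ (Fin p)) 1) :=
        Metric.measure_closedBall_pos volume 0 one_pos
    _ = volume (Metric.closedBall (0 : EuclideanSpace ℝ (Fin p)) 1 \
        (((ℝ ∙ u)ᗮ : Submodule ℝ (EuclideanSpace ℝ (Fin p))) : Set _)) :=
        (measure_diff_null hS0).symm
    _ ≤ (volume.restrict (Metric.closedBall (0 : EuclideanSpace ℝ (Fin p)) 1))
        (Function.support fun w => ENNReal.ofReal |⟪w, u⟫|) := by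
        rw [Measure.restrict_apply' measurableSet_closedBall]
        apply measure_mono
        intro w hw
        exact ⟨hsub ⟨hw.1, hw.2⟩, hw.1⟩

noncomputable def ED.L (κ l : Measure (EuclideanSpace ℝ (Fin p))) : ENNReal :=
  ∫⁻ x, ∫⁻ y, ENNReal.ofReal ‖x - y‖ ∂l ∂κ

noncomputable def ED.J (κ l : Measure (EuclideanSpace ℝ (Fin p)))
    (w : EuclideanSpace ℝ (Fin p)) : ENNReal :=
  ∫⁻ x, ∫⁻ y, ENNReal.ofReal |⟪w, x⟫ - ⟪w, y⟫| ∂l ∂κ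

lemma ED.measJ (κ l : Measure (EuclideanSpace ℝ (Fin p))) [SFinite κ] [SFinite l] :
    Measurable (ED.J κ l) := by
  have h0 : Measurable fun q : ((EuclideanSpace ℝ (Fin p)) × (EuclideanSpace ℝ (Fin p)))
      × (EuclideanSpace ℝ (Fin p)) =>
      ENNReal.ofReal |⟪q.1.1, q.1.2⟫ - ⟪q.1.1, q.2⟫| := by
    apply ENNReal.measurable_ofReal.comp
    apply Continuous.measurable
    exact ((continuous_fst.fst.inner continuous_fst.snd).sub
      (continuous_fst.fst.inner continuous_snd)).abs
  have h1 := h0.lintegral_prod_right' (ν := l)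
  have h2 := h1.lintegral_prod_right' (ν := κ)
  exact h2

lemma ED.key (u : EuclideanSpace ℝ (Fin p)) (hu : ‖u‖ = 1)
    (κ l : Measure (EuclideanSpace ℝ (Fin p))) [SFinite κ] [SFinite l] :
    (∫⁻ w in Metric.closedBall (0 : EuclideanSpace ℝ (Fin p)) 1,
        ENNReal.ofReal |⟪w, u⟫|) * ED.L κ l
      = ∫⁻ w in Metric.closedBall (0 : EuclideanSpace ℝ (Fin p)) 1, ED.J κ l w := by
  set B := Metric.closedBall (0 : EuclideanSpace ℝ (Fin p)) 1 with hB
  set c₀ := ∫⁻ w in B, ENNReal.ofReal |⟪w, u⟫| with hc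
  have step1 : c₀ * ED.L κ l
      = ∫⁻ x, ∫⁻ y, ∫⁻ w in B, ENNReal.ofReal |⟪w, x - y⟫| ∂volume ∂l ∂κ := by
    rw [ED.L, ← lintegral_const_mul' c₀ _ (ED.c0_ne_top u hu)]
    apply lintegral_congr; intro x
    rw [← lintegral_const_mul' c₀ _ (ED.c0_ne_top u hu)]
    apply lintegral_congr; intro y
    rw [ED.c_homog u (x - y) hu, mul_comm]
  rw [step1]
  have step2 : ∀ x, ∫⁻ y, ∫⁻ w in B, ENNReal.ofReal |⟪w, x - y⟫| ∂volume ∂l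
      = ∫⁻ w in B, ∫⁻ y, ENNReal.ofReal |⟪w, x - y⟫| ∂l ∂volume := by
    intro x
    apply lintegral_lintegral_swap
    apply Measurable.aemeasurable
    apply ENNReal.measurable_ofReal.comp
    apply Continuous.measurable
    exact ((continuous_snd.inner (continuous_const.sub continuous_fst)).abs)
  simp_rw [step2]
  rw [lintegral_lintegral_swap]
  · apply setLIntegral_congr_fun measurableSet_closedBall
    intro w _
    rw [ED.J]
    apply lintegral_congr; intro x
    apply lintegral_congr; intro y
    rw [inner_sub_right]
  · apply Measurable.aemeasurable
    have h0 : Measurable fun q : ((EuclideanSpace ℝ (Fin p)) × (EuclideanSpace ℝ (Fin p)))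
        × (EuclideanSpace ℝ (Fin p)) =>
        ENNReal.ofReal |⟪q.1.2, q.1.1 - q.2⟫| := by
      apply ENNReal.measurable_ofReal.comp
      apply Continuous.measurable
      exact ((continuous_fst.snd.inner (continuous_fst.fst.sub continuous_snd)).abs)
    exact h0.lintegral_prod_right' (ν := l)

lemma ED.J_map (κ l : Measure (EuclideanSpace ℝ (Fin p)))
    [IsProbabilityMeasure κ] [IsProbabilityMeasure l] (w : EuclideanSpace ℝ (Fin p)) :
    ED.J κ l w = ∫⁻ a, ∫⁻ b, ENNReal.ofReal |a - b|
      ∂(l.map fun x => ⟪w, x⟫) ∂(κ.map fun x => ⟪w, x⟫) := by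
  have hφ : Measurable fun x : EuclideanSpace ℝ (Fin p) => ⟪w, x⟫ :=
    (continuous_const.inner continuous_id).measurable
  haveI : IsProbabilityMeasure (l.map fun x => ⟪w, x⟫) :=
    Measure.isProbabilityMeasure_map hφ.aemeasurable
  have habs : Measurable fun q : ℝ × ℝ => ENNReal.ofReal |q.1 - q.2| :=
    ENNReal.measurable_ofReal.comp ((continuous_fst.sub continuous_snd).abs).measurable
  rw [lintegral_map (habs.lintegral_prod_right' (ν := l.map fun x => ⟪w, x⟫)) hφ]
  apply lintegral_congr; intro x
  rw [lintegral_map (f := fun b => ENNReal.ofReal |⟪w, x⟫ - b|)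
    (ENNReal.measurable_ofReal.comp ((continuous_const.sub continuous_id).abs).measurable) hφ]

lemma ED.J_ineq (κ l : Measure (EuclideanSpace ℝ (Fin p)))
    [IsProbabilityMeasure κ] [IsProbabilityMeasure l] (w : EuclideanSpace ℝ (Fin p)) :
    ED.J κ κ w + ED.J l l w ≤ 2 * ED.J κ l w := by
  have hφ : Measurable fun x : EuclideanSpace ℝ (Fin p) => ⟪w, x⟫ :=
    (continuous_const.inner continuous_id).measurable
  haveI : IsProbabilityMeasure (κ.map fun x => ⟪w, x⟫) :=
    Measure.isProbabilityMeasure_map hφ.aemeasurable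
  haveI : IsProbabilityMeasure (l.map fun x => ⟪w, x⟫) :=
    Measure.isProbabilityMeasure_map hφ.aemeasurable
  rw [ED.J_map κ κ w, ED.J_map l l w, ED.J_map κ l w]
  exact ED.oneD _ _

lemma ED.main (F G : Measure (EuclideanSpace ℝ (Fin p)))
    [IsProbabilityMeasure F] [IsProbabilityMeasure G] :
    ED.L F F + ED.L G G ≤ 2 * ED.L G F := by
  by_cases hp : p = 0
  · subst hp
    have hz : ∀ κ l : Measure (EuclideanSpace ℝ (Fin 0)), ED.L κ l = 0 := by
      intro κ l
      rw [ED.L]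
      have : ∀ x y : EuclideanSpace ℝ (Fin 0), ENNReal.ofReal ‖x - y‖ = 0 := by
        intro x y
        rw [Subsingleton.elim x y]
        simp
      simp [this]
    simp [hz]
  · set u : EuclideanSpace ℝ (Fin p) :=
      EuclideanSpace.single (⟨0, Nat.pos_of_ne_zero hp⟩ : Fin p) (1 : ℝ) with hudef
    have hu : ‖u‖ = 1 := by rw [hudef, EuclideanSpace.norm_single]; norm_num
    set c₀ := ∫⁻ w in Metric.closedBall (0 : EuclideanSpace ℝ (Fin p)) 1,
      ENNReal.ofReal |⟪w, u⟫| with hc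
    rw [← ENNReal.mul_le_mul_iff_right (a := c₀) (ED.c0_ne_zero u hu) (ED.c0_ne_top u hu)]
    calc c₀ * (ED.L F F + ED.L G G)
        = c₀ * ED.L F F + c₀ * ED.L G G := mul_add _ _ _
      _ = (∫⁻ w in Metric.closedBall (0 : EuclideanSpace ℝ (Fin p)) 1, ED.J F F w)
          + ∫⁻ w in Metric.closedBall (0 : EuclideanSpace ℝ (Fin p)) 1, ED.J G G w := by
          rw [ED.key u hu F F, ED.key u hu G G]
      _ = ∫⁻ w in Metric.closedBall (0 : EuclideanSpace ℝ (Fin p)) 1,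
            (ED.J F F w + ED.J G G w) := by
          rw [← lintegral_add_left (ED.measJ F F)]
      _ ≤ ∫⁻ w in Metric.closedBall (0 : EuclideanSpace ℝ (Fin p)) 1,
            2 * ED.J G F w := by
          apply lintegral_mono
          intro w
          show ED.J F F w + ED.J G G w ≤ 2 * ED.J G F w
          rw [add_comm]
          exact ED.J_ineq G F w
      _ = 2 * ∫⁻ w in Metric.closedBall (0 : EuclideanSpace ℝ (Fin p)) 1, ED.J G F w := by
          rw [lintegral_const_mul' 2 _ (by norm_num)]
      _ = c₀ * (2 * ED.L G F) := by
          rw [← ED.key u hu G F, mul_left_comm]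

lemma ED.lint_norm_lt_top {l : Measure (EuclideanSpace ℝ (Fin p))}
    (hl : Integrable (fun y => ‖y‖) l) : ∫⁻ y, ENNReal.ofReal ‖y‖ ∂l < ⊤ := by
  have := hl.hasFiniteIntegral
  rw [HasFiniteIntegral] at this
  convert this using 2
  funext y
  rw [← ofReal_norm, norm_norm]

lemma ED.inner_bound {l : Measure (EuclideanSpace ℝ (Fin p))} [IsProbabilityMeasure l]
    (hl : Integrable (fun y => ‖y‖) l) (x : EuclideanSpace ℝ (Fin p)) :
    ∫⁻ y, ENNReal.ofReal ‖x - y‖ ∂l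
      ≤ ENNReal.ofReal ‖x‖ + ∫⁻ y, ENNReal.ofReal ‖y‖ ∂l := by
  calc ∫⁻ y, ENNReal.ofReal ‖x - y‖ ∂l
      ≤ ∫⁻ y, (ENNReal.ofReal ‖x‖ + ENNReal.ofReal ‖y‖) ∂l := by
        apply lintegral_mono
        intro y
        show ENNReal.ofReal ‖x - y‖ ≤ ENNReal.ofReal ‖x‖ + ENNReal.ofReal ‖y‖
        rw [← ENNReal.ofReal_add (norm_nonneg x) (norm_nonneg y)]
        exact ENNReal.ofReal_le_ofReal (norm_sub_le x y)
    _ = ENNReal.ofReal ‖x‖ + ∫⁻ y, ENNReal.ofReal ‖y‖ ∂l := by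
        rw [lintegral_add_left measurable_const, lintegral_const, measure_univ, mul_one]

lemma ED.L_ne_top {κ l : Measure (EuclideanSpace ℝ (Fin p))}
    [IsProbabilityMeasure κ] [IsProbabilityMeasure l]
    (hκ : Integrable (fun y => ‖y‖) κ) (hl : Integrable (fun y => ‖y‖) l) :
    ED.L κ l ≠ ⊤ := by
  have hle : ED.L κ l ≤ (∫⁻ x, ENNReal.ofReal ‖x‖ ∂κ) + ∫⁻ y, ENNReal.ofReal ‖y‖ ∂l := by
    calc ED.L κ l ≤ ∫⁻ x, (ENNReal.ofReal ‖x‖ + ∫⁻ y, ENNReal.ofReal ‖y‖ ∂l) ∂κ :=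
          lintegral_mono (fun x => ED.inner_bound hl x)
      _ = _ := by
        rw [lintegral_add_right _ measurable_const, lintegral_const, measure_univ, mul_one]
  exact ne_top_of_le_ne_top (ENNReal.add_ne_top.2
    ⟨(ED.lint_norm_lt_top hκ).ne, (ED.lint_norm_lt_top hl).ne⟩) hle

lemma ED.integral_eq (κ l : Measure (EuclideanSpace ℝ (Fin p)))
    [IsProbabilityMeasure κ] [IsProbabilityMeasure l]
    (hl : Integrable (fun y => ‖y‖) l) :
    ∫ x, ∫ y, ‖x - y‖ ∂l ∂κ = (ED.L κ l).toReal := by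
  have hin : ∀ x : EuclideanSpace ℝ (Fin p),
      ∫ y, ‖x - y‖ ∂l = (∫⁻ y, ENNReal.ofReal ‖x - y‖ ∂l).toReal := by
    intro x
    rw [integral_eq_lintegral_of_nonneg_ae (Filter.Eventually.of_forall fun y => norm_nonneg _)
      ((by fun_prop : Continuous fun y : EuclideanSpace ℝ (Fin p) => ‖x - y‖).aestronglyMeasurable)]
  simp_rw [hin]
  rw [ED.L, integral_toReal]
  · apply Measurable.aemeasurable
    have hm : Measurable fun q : EuclideanSpace ℝ (Fin p) × EuclideanSpace ℝ (Fin p) =>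
        ENNReal.ofReal ‖q.1 - q.2‖ := by
      apply ENNReal.measurable_ofReal.comp
      apply Continuous.measurable
      exact (continuous_fst.sub continuous_snd).norm
    exact hm.lintegral_prod_right'
  · apply Filter.Eventually.of_forall
    intro x
    exact lt_of_le_of_lt (ED.inner_bound hl x)
      (ENNReal.add_lt_top.2 ⟨ENNReal.ofReal_lt_top, ED.lint_norm_lt_top hl⟩)

/-- The energy distance `E(F,G) = 2 E‖X−Y‖ − E‖Y−Y'‖ − E‖X−X'‖`
(with `X,X' ~ G` i.i.d., `Y,Y' ~ F` i.i.d., all independent) is nonnegative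
for distributions on `ℝ^p` with finite first moments. -/
theorem energy_distance_nonneg (p : ℕ)
    (F G : Measure (EuclideanSpace ℝ (Fin p)))
    [IsProbabilityMeasure F] [IsProbabilityMeasure G]
    (hF : Integrable (fun y => ‖y‖) F) (hG : Integrable (fun x => ‖x‖) G) :
    0 ≤ 2 * (∫ x, ∫ y, ‖x - y‖ ∂F ∂G)
      - (∫ y, ∫ y', ‖y - y'‖ ∂F ∂F)
      - (∫ x, ∫ x', ‖x - x'‖ ∂G ∂G) := by
  rw [ED.integral_eq G F hF, ED.integral_eq F F hF, ED.integral_eq G G hG]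
  have h := ED.main F G
  have hFF := ED.L_ne_top hF hF
  have hGG := ED.L_ne_top hG hG
  have hGF := ED.L_ne_top hG hF
  have h2 : (ED.L F F).toReal + (ED.L G G).toReal ≤ 2 * (ED.L G F).toReal := by
    rw [← ENNReal.toReal_add hFF hGG]
    calc (ED.L F F + ED.L G G).toReal ≤ (2 * ED.L G F).toReal := by
          apply ENNReal.toReal_mono _ h
          exact ENNReal.mul_ne_top (by norm_num) hGF
      _ = 2 * (ED.L G F).toReal := by
          rw [ENNReal.toReal_mul, ENNReal.toReal_ofNat]
  linarith
end

section
/- For fixed x ∈ [0,1]^p and λ > 0, if θ₁,…,θ_p are i.i.d. Exponential(λ) and Y is uniform on [0,1]^p, independent of θ, then E[exp(−Σ_l θ_l (x_l − Y_l)²)] = λ^{p/2} ∏_{l=1}^p φ(x_l; λ), where φ(x;λ) = arctan(x/√λ) + arctan((1−x)/√λ). -/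
open MeasureTheory

section Aux
open Real Set

lemma indicator_univ_pi_prod {ι : Type*} [Fintype ι] (s : ι → Set ℝ) (f : ι → ℝ → ℝ)
    (z : ι → ℝ) :
    (Set.univ.pi s).indicator (fun w => ∏ i, f i (w i)) z = ∏ i, (s i).indicator (f i) (z i) := by
  by_cases h : z ∈ Set.univ.pi s
  · rw [Set.indicator_of_mem h]
    exact Finset.prod_congr rfl fun i _ => (Set.indicator_of_mem (h i (Set.mem_univ i)) _).symm
  · rw [Set.indicator_of_notMem h]
    rw [Set.mem_univ_pi] at h
    push_neg at h
    obtain ⟨i, hi⟩ := h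
    exact (Finset.prod_eq_zero (Finset.mem_univ i) (Set.indicator_of_notMem hi _)).symm



lemma integral_exp_neg_mul_Ioi' {b : ℝ} (hb : 0 < b) :
    ∫ t in Set.Ioi (0:ℝ), Real.exp (-(b*t)) = 1/b := by
  have := integral_comp_mul_left_Ioi (fun x => Real.exp (-x)) 0 hb
  simp only [mul_zero, integral_exp_neg_Ioi, neg_zero, Real.exp_zero, smul_eq_mul, mul_one] at this
  rw [this]; ring

lemma key1 (lam : ℝ) (hlam : 0 < lam) (c : ℝ) :
    ∫ t in Set.Ioi (0:ℝ),
      (∫ y in Set.Icc (0:ℝ) 1, Real.exp (-(t * (c - y)^2))) * (lam * Real.exp (-(lam * t)))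
    = Real.sqrt lam * (Real.arctan (c / Real.sqrt lam) + Real.arctan ((1 - c)/Real.sqrt lam)) := by
  set s := Real.sqrt lam with hs_def
  have hs : 0 < s := Real.sqrt_pos.mpr hlam
  have hs2 : s^2 = lam := Real.sq_sqrt hlam.le
  have hfin : IsFiniteMeasure (volume.restrict (Set.Icc (0:ℝ) 1)) := by
    constructor; simp [Real.volume_Icc]
  -- integrability on the product
  have hcont : Continuous fun z : ℝ × ℝ =>
      Real.exp (-(z.1 * (c - z.2)^2)) * (lam * Real.exp (-(lam * z.1))) := by
    continuity
  have hbound : Integrable (fun z : ℝ × ℝ => lam * Real.exp (-(lam * z.1)))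
      ((volume.restrict (Set.Ioi (0:ℝ))).prod (volume.restrict (Set.Icc (0:ℝ) 1))) := by
    have h1 : Integrable (fun t : ℝ => lam * Real.exp (-(lam * t)))
        (volume.restrict (Set.Ioi (0:ℝ))) := by
      simp_rw [neg_mul_eq_neg_mul]
      exact (exp_neg_integrableOn_Ioi 0 hlam).const_mul lam
    have h2 : Integrable (fun _ : ℝ => (1:ℝ)) (volume.restrict (Set.Icc (0:ℝ) 1)) :=
      integrable_const 1
    simpa using h1.mul_prod h2
  have hint : Integrable (Function.uncurry fun t y =>
      Real.exp (-(t * (c - y)^2)) * (lam * Real.exp (-(lam * t))))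
      ((volume.restrict (Set.Ioi (0:ℝ))).prod (volume.restrict (Set.Icc (0:ℝ) 1))) := by
    refine hbound.mono hcont.aestronglyMeasurable ?_
    rw [Measure.prod_restrict]
    filter_upwards [ae_restrict_mem (measurableSet_Ioi.prod measurableSet_Icc)] with z hz
    rcases hz with ⟨hz1, -⟩
    simp only [Function.uncurry, Real.norm_eq_abs, abs_mul, Real.abs_exp, abs_of_pos hlam]
    have h1 : Real.exp (-(z.1 * (c - z.2)^2)) ≤ 1 := by
      rw [Real.exp_le_one_iff, neg_nonpos]
      have hz : (0:ℝ) < z.1 := hz1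
      positivity
    nlinarith [mul_pos hlam (Real.exp_pos (-(lam * z.1)))]
  calc ∫ t in Set.Ioi (0:ℝ),
        (∫ y in Set.Icc (0:ℝ) 1, Real.exp (-(t * (c - y)^2))) * (lam * Real.exp (-(lam * t)))
      = ∫ t in Set.Ioi (0:ℝ), ∫ y in Set.Icc (0:ℝ) 1,
          Real.exp (-(t * (c - y)^2)) * (lam * Real.exp (-(lam * t))) := by
        simp_rw [integral_mul_const]
    _ = ∫ y in Set.Icc (0:ℝ) 1, ∫ t in Set.Ioi (0:ℝ),
          Real.exp (-(t * (c - y)^2)) * (lam * Real.exp (-(lam * t))) := by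
        exact integral_integral_swap hint
    _ = ∫ y in Set.Icc (0:ℝ) 1, lam / ((c - y)^2 + lam) := by
        refine setIntegral_congr_fun measurableSet_Icc fun y _ => ?_
        have hA : (0:ℝ) < (c - y)^2 + lam := by positivity
        have heq : ∀ t : ℝ, Real.exp (-(t * (c - y)^2)) * (lam * Real.exp (-(lam * t)))
            = lam * Real.exp (-(((c - y)^2 + lam) * t)) := by
          intro t
          rw [mul_left_comm, ← Real.exp_add]
          congr 2
          ring
        simp_rw [heq]
        rw [integral_const_mul, integral_exp_neg_mul_Ioi' hA]
        ring
    _ = s * (Real.arctan (c / s) + Real.arctan ((1 - c)/s)) := by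
        rw [MeasureTheory.integral_Icc_eq_integral_Ioc,
          ← intervalIntegral.integral_of_le (zero_le_one)]
        have hderiv : ∀ y ∈ Set.uIcc (0:ℝ) 1,
            HasDerivAt (fun y => s * Real.arctan ((y - c)/s)) (lam / ((c - y)^2 + lam)) y := by
          intro y _
          have h1 : HasDerivAt (fun y : ℝ => (y - c)/s) (1/s) y := by
            simpa using ((hasDerivAt_id y).sub_const c).div_const s
          have h2 := (Real.hasDerivAt_arctan ((y - c)/s)).comp y h1
          have h3 : HasDerivAt (fun y => s * Real.arctan ((y - c)/s))
              (s * (1 / (1 + ((y - c) / s) ^ 2) * (1 / s))) y := h2.const_mul s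
          convert h3 using 1
          have hA : (0:ℝ) < (c - y)^2 + lam := by positivity
          field_simp
          linear_combination (-(y-c)^2) * hs2
        rw [intervalIntegral.integral_eq_sub_of_hasDerivAt hderiv ?_]
        · have : ((0:ℝ) - c)/s = -(c/s) := by ring
          rw [this, Real.arctan_neg]
          ring
        · apply Continuous.intervalIntegrable
          exact continuous_const.div (by continuity) (fun y => by positivity)

end Aux

/-- For fixed `x ∈ [0,1]^p` and `λ > 0`, with `θ₁,…,θ_p` i.i.d. `Exponential(λ)` and
`Y` uniform on `[0,1]^p` independent of `θ`,
`E[exp(−Σ_l θ_l (x_l − Y_l)²)] = λ^{p/2} Π_l φ(x_l; λ)`, where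
`φ(x;λ) = arctan(x/√λ) + arctan((1−x)/√λ)`. -/
theorem expectation_gaussian_kernel_uniform_exponential (p : ℕ) (lam : ℝ) (hlam : 0 < lam)
    (x : Fin p → ℝ) (hx : ∀ l, x l ∈ Set.Icc (0 : ℝ) 1) :
    ∫ θ in Set.univ.pi fun _ : Fin p => Set.Ioi (0 : ℝ),
      ((∫ y in Set.univ.pi fun _ : Fin p => Set.Icc (0 : ℝ) 1,
          Real.exp (-∑ l, θ l * (x l - y l) ^ 2))
        * ∏ l, lam * Real.exp (-lam * θ l))
    = Real.sqrt lam ^ p *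
        ∏ l, (Real.arctan (x l / Real.sqrt lam)
          + Real.arctan ((1 - x l) / Real.sqrt lam)) := by
  have hIoi : MeasurableSet (Set.univ.pi fun _ : Fin p => Set.Ioi (0:ℝ)) :=
    MeasurableSet.univ_pi fun _ => measurableSet_Ioi
  have hIcc : MeasurableSet (Set.univ.pi fun _ : Fin p => Set.Icc (0:ℝ) 1) :=
    MeasurableSet.univ_pi fun _ => measurableSet_Icc
  have hinner : ∀ θ : Fin p → ℝ,
      (∫ y in Set.univ.pi fun _ : Fin p => Set.Icc (0:ℝ) 1,
        Real.exp (-∑ l, θ l * (x l - y l) ^ 2))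
      = ∏ l, ∫ y in Set.Icc (0:ℝ) 1, Real.exp (-(θ l * (x l - y)^2)) := by
    intro θ
    have h1 : ∀ y : Fin p → ℝ, Real.exp (-∑ l, θ l * (x l - y l) ^ 2)
        = ∏ l, (fun t => Real.exp (-(θ l * (x l - t)^2))) (y l) := by
      intro y
      rw [← Finset.sum_neg_distrib, Real.exp_sum]
    simp_rw [h1]
    rw [← integral_indicator hIcc]
    simp_rw [indicator_univ_pi_prod (fun _ => Set.Icc (0:ℝ) 1)
      (fun l t => Real.exp (-(θ l * (x l - t)^2)))]
    rw [integral_fintype_prod_volume_eq_prod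
      (f := fun l t => (Set.Icc (0:ℝ) 1).indicator
        (fun u => Real.exp (-(θ l * (x l - u)^2))) t)]
    exact Finset.prod_congr rfl fun l _ => integral_indicator measurableSet_Icc
  calc ∫ θ in Set.univ.pi fun _ : Fin p => Set.Ioi (0 : ℝ),
        ((∫ y in Set.univ.pi fun _ : Fin p => Set.Icc (0 : ℝ) 1,
            Real.exp (-∑ l, θ l * (x l - y l) ^ 2))
          * ∏ l, lam * Real.exp (-lam * θ l))
      = ∫ θ in Set.univ.pi fun _ : Fin p => Set.Ioi (0 : ℝ),
          ∏ l, (fun t => (∫ y in Set.Icc (0:ℝ) 1, Real.exp (-(t * (x l - y)^2)))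
            * (lam * Real.exp (-(lam * t)))) (θ l) := by
        refine setIntegral_congr_fun hIoi fun θ _ => ?_
        rw [hinner θ, ← Finset.prod_mul_distrib]
        simp [neg_mul]
    _ = ∏ l, ∫ t in Set.Ioi (0:ℝ),
          (∫ y in Set.Icc (0:ℝ) 1, Real.exp (-(t * (x l - y)^2)))
            * (lam * Real.exp (-(lam * t))) := by
        rw [← integral_indicator hIoi]
        simp_rw [indicator_univ_pi_prod (fun _ => Set.Ioi (0:ℝ))
          (fun l t => (∫ y in Set.Icc (0:ℝ) 1, Real.exp (-(t * (x l - y)^2)))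
            * (lam * Real.exp (-(lam * t))))]
        rw [integral_fintype_prod_volume_eq_prod
          (f := fun l t => (Set.Ioi (0:ℝ)).indicator
            (fun t => (∫ y in Set.Icc (0:ℝ) 1, Real.exp (-(t * (x l - y)^2)))
              * (lam * Real.exp (-(lam * t)))) t)]
        exact Finset.prod_congr rfl fun l _ => integral_indicator measurableSet_Ioi
    _ = ∏ l, (Real.sqrt lam * (Real.arctan (x l / Real.sqrt lam)
          + Real.arctan ((1 - x l)/Real.sqrt lam))) :=
        Finset.prod_congr rfl fun l _ => key1 lam hlam (x l)
    _ = Real.sqrt lam ^ p *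
        ∏ l, (Real.arctan (x l / Real.sqrt lam)
          + Real.arctan ((1 - x l) / Real.sqrt lam)) := by
        rw [Finset.prod_mul_distrib, Finset.prod_const, Finset.card_univ, Fintype.card_fin]
end

section
/- Let {x₁,…,xₙ} ⊆ [0,1]^p, λ > 0, θ with i.i.d. Exponential(λ) coordinates, Y uniform on [0,1]^p independent of θ, and γ_θ(x,y) = exp(−Σ_l θ_l(x_l−y_l)²). Then the criterion −(2/n)Σᵢ E[γ_θ(xᵢ,Y)] + (1/n²)ΣᵢΣⱼ E[γ_θ(xᵢ,xⱼ)] equals (2λ^p/n²)·[ MaxPro(D;λ) − (n/λ^{p/2}) Σᵢ ∏_l φ(x_{i,l};λ) + n/(2λ^p) ], where MaxPro(D;λ) = Σ_{i<j} 1/∏_l((x_{i,l}−x_{j,l})² + λ) and φ(x;λ) = arctan(x/√λ) + arctan((1−x)/√λ). -/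
open MeasureTheory

/-- The anisotropic Gaussian kernel `γ_θ(x,y) = exp(−Σ_l θ_l (x_l − y_l)²)`. -/
noncomputable def gammaKer {p : ℕ} (θ x y : Fin p → ℝ) : ℝ :=
  Real.exp (-∑ l, θ l * (x l - y l) ^ 2)

/-- The i.i.d. `Exponential(λ)` prior density `Π_l λ e^{−λ θ_l}`. -/
noncomputable def expDens {p : ℕ} (lam : ℝ) (θ : Fin p → ℝ) : ℝ :=
  ∏ l, lam * Real.exp (-lam * θ l)

/-- The boundary-correction term `φ(x;λ) = arctan(x/√λ) + arctan((1−x)/√λ)`. -/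
noncomputable def phiCorr (lam t : ℝ) : ℝ :=
  Real.arctan (t / Real.sqrt lam) + Real.arctan ((1 - t) / Real.sqrt lam)

/-- The MaxPro criterion `MaxPro(D;λ) = Σ_{i<j} 1 / Π_l ((x_{i,l}−x_{j,l})² + λ)`. -/
noncomputable def maxPro {n p : ℕ} (lam : ℝ) (x : Fin n → Fin p → ℝ) : ℝ :=
  ∑ i : Fin n, ∑ j ∈ Finset.univ.filter (fun j => i < j),
    1 / ∏ l, ((x i l - x j l) ^ 2 + lam)

open Set Real

section Aux

theorem integral_pi_prod' {n : ℕ} (μ : Fin n → Measure ℝ) [∀ i, SigmaFinite (μ i)]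
    (f : Fin n → ℝ → ℝ) :
    ∫ x : Fin n → ℝ, (∏ i, f i (x i)) ∂(Measure.pi μ) = ∏ i, ∫ t, f i t ∂(μ i) := by
  induction n with
  | zero => simp [Measure.pi_univ, Measure.real]
  | succ m ih =>
      calc
        _ = ∫ x : ℝ × (Fin m → ℝ),
            f 0 x.1 * ∏ i : Fin m, f (Fin.succ i) (x.2 i)
              ∂((μ 0).prod (Measure.pi fun i => μ (Fin.succ i))) := by
          rw [← ((measurePreserving_piFinSuccAbove μ 0).symm).integral_comp']
          simp_rw [MeasurableEquiv.piFinSuccAbove_symm_apply, Fin.insertNthEquiv,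
            Fin.prod_univ_succ, Fin.insertNth_zero, Equiv.coe_fn_mk, Fin.cons_succ,
            Fin.zero_succAbove, Fin.cons_zero, cast_eq]
        _ = (∫ t, f 0 t ∂(μ 0)) * ∏ i : Fin m, ∫ t, f (Fin.succ i) t ∂(μ (Fin.succ i)) := by
          rw [← ih, ← integral_prod_mul]
        _ = ∏ i, ∫ t, f i t ∂(μ i) := by rw [Fin.prod_univ_succ]

theorem restrict_pi_pi' {n : ℕ} (s : Fin n → Set ℝ) (hs : ∀ i, MeasurableSet (s i)) :
    (volume : Measure (Fin n → ℝ)).restrict (Set.univ.pi s)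
      = Measure.pi (fun i => (volume : Measure ℝ).restrict (s i)) := by
  refine (Measure.pi_eq fun t ht => ?_).symm
  rw [Measure.restrict_apply (MeasurableSet.univ_pi ht),
    ← Set.pi_inter_distrib, volume_pi_pi]
  simp_rw [Measure.restrict_apply (ht _)]

theorem integral_pi_set_prod {n : ℕ} (s : Fin n → Set ℝ) (hs : ∀ i, MeasurableSet (s i))
    (f : Fin n → ℝ → ℝ) :
    ∫ x in Set.univ.pi s, (∏ i, f i (x i)) = ∏ i, ∫ t in s i, f i t := by
  rw [restrict_pi_pi' s hs, integral_pi_prod']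

theorem exp_int {c : ℝ} (hc : 0 < c) : ∫ s in Set.Ioi (0:ℝ), Real.exp (-(c * s)) = 1 / c := by
  have h := MeasureTheory.integral_comp_mul_left_Ioi (fun x => Real.exp (-x)) 0 hc
  simp only [mul_zero, integral_exp_neg_Ioi, neg_zero, Real.exp_zero, smul_eq_mul,
    mul_one] at h
  rw [h, one_div]

theorem expect_gamma {p : ℕ} {lam : ℝ} (hlam : 0 < lam) (a b : Fin p → ℝ) :
    ∫ θ in Set.univ.pi (fun _ : Fin p => Set.Ioi (0:ℝ)), gammaKer θ a b * expDens lam θ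
      = ∏ l, lam / ((a l - b l) ^ 2 + lam) := by
  have key : ∀ θ : Fin p → ℝ, gammaKer θ a b * expDens lam θ
      = ∏ l, (lam * Real.exp (-((((a l - b l) ^ 2 + lam)) * θ l))) := by
    intro θ
    unfold gammaKer expDens
    rw [← Finset.sum_neg_distrib, Real.exp_sum, ← Finset.prod_mul_distrib]
    refine Finset.prod_congr rfl fun l _ => ?_
    rw [mul_left_comm, ← Real.exp_add]
    congr 1
    ring
  simp_rw [key]
  rw [integral_pi_set_prod _ (fun _ => measurableSet_Ioi)
    (fun l t => lam * Real.exp (-(((a l - b l) ^ 2 + lam) * t)))]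
  refine Finset.prod_congr rfl fun l _ => ?_
  have hc : 0 < (a l - b l) ^ 2 + lam := by positivity
  rw [integral_const_mul, exp_int hc]
  field_simp

theorem phi_int {lam : ℝ} (hlam : 0 < lam) (c : ℝ) :
    ∫ t in Set.Icc (0:ℝ) 1, lam / ((c - t) ^ 2 + lam)
      = Real.sqrt lam * phiCorr lam c := by
  have hs : 0 < Real.sqrt lam := Real.sqrt_pos.2 hlam
  have hsq : Real.sqrt lam ^ 2 = lam := Real.sq_sqrt hlam.le
  rw [MeasureTheory.integral_Icc_eq_integral_Ioc,
    ← intervalIntegral.integral_of_le (zero_le_one)]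
  have h1 : ∀ t : ℝ, lam / ((c - t) ^ 2 + lam)
      = (fun u => 1 / ((u / Real.sqrt lam) ^ 2 + 1)) (t - c) := by
    intro t
    have : ((t - c) / Real.sqrt lam) ^ 2 + 1 = ((c - t) ^ 2 + lam) / lam := by
      field_simp
      rw [hsq]; ring
    simp only []
    rw [this, one_div, inv_div]
  simp_rw [h1]
  rw [intervalIntegral.integral_comp_sub_right (fun u => 1 / ((u / Real.sqrt lam) ^ 2 + 1)) c]
  rw [intervalIntegral.integral_comp_div (fun v => 1 / (v ^ 2 + 1)) hs.ne']
  simp_rw [show ∀ v : ℝ, 1 / (v ^ 2 + 1) = 1 / (1 + v ^ 2) by intro v; ring_nf]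
  rw [integral_one_div_one_add_sq]
  rw [smul_eq_mul, phiCorr]
  rw [show (0 - c) / Real.sqrt lam = -(c / Real.sqrt lam) by ring]
  rw [Real.arctan_neg]
  ring

theorem oneD_y {lam : ℝ} (hlam : 0 < lam) (c : ℝ) :
    ∫ s in Set.Ioi (0:ℝ),
        (∫ t in Set.Icc (0:ℝ) 1, Real.exp (-(s * (c - t) ^ 2))) * (lam * Real.exp (-lam * s))
      = ∫ t in Set.Icc (0:ℝ) 1, lam / ((c - t) ^ 2 + lam) := by
  have hF : Integrable (Function.uncurry fun s t =>
      Real.exp (-(s * (c - t) ^ 2)) * (lam * Real.exp (-lam * s)))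
      (((volume : Measure ℝ).restrict (Set.Ioi 0)).prod
        ((volume : Measure ℝ).restrict (Set.Icc 0 1))) := by
    have hcont : Continuous (Function.uncurry fun s t : ℝ =>
        Real.exp (-(s * (c - t) ^ 2)) * (lam * Real.exp (-lam * s))) := by
      fun_prop
    have hg : Integrable (fun z : ℝ × ℝ => lam * Real.exp (-lam * z.1))
        (((volume : Measure ℝ).restrict (Set.Ioi 0)).prod
          ((volume : Measure ℝ).restrict (Set.Icc 0 1))) := by
      have h1 : Integrable (fun s : ℝ => lam * Real.exp (-lam * s))
          ((volume : Measure ℝ).restrict (Set.Ioi 0)) := by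
        exact (exp_neg_integrableOn_Ioi 0 hlam).const_mul lam
      have h2 : Integrable (fun _ : ℝ => (1:ℝ))
          ((volume : Measure ℝ).restrict (Set.Icc 0 1)) := by
        exact integrable_const 1
      simpa using h1.mul_prod h2
    refine hg.mono hcont.aestronglyMeasurable ?_
    rw [Measure.prod_restrict]
    filter_upwards [ae_restrict_mem (measurableSet_Ioi.prod measurableSet_Icc)] with z hz
    have hz1 : (0:ℝ) < z.1 := hz.1
    have h1 : Real.exp (-(z.1 * (c - z.2) ^ 2)) ≤ 1 := by
      rw [Real.exp_le_one_iff]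
      nlinarith [sq_nonneg (c - z.2)]
    have h2 : (0:ℝ) < lam * Real.exp (-lam * z.1) := by positivity
    calc ‖Real.exp (-(z.1 * (c - z.2) ^ 2)) * (lam * Real.exp (-lam * z.1))‖
        = Real.exp (-(z.1 * (c - z.2) ^ 2)) * (lam * Real.exp (-lam * z.1)) := by
          rw [Real.norm_eq_abs, abs_of_pos (by positivity)]
      _ ≤ 1 * (lam * Real.exp (-lam * z.1)) := by
          exact mul_le_mul_of_nonneg_right h1 h2.le
      _ = lam * Real.exp (-lam * z.1) := one_mul _
      _ ≤ ‖lam * Real.exp (-lam * z.1)‖ := le_abs_self _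
  simp_rw [← MeasureTheory.integral_mul_const]
  rw [MeasureTheory.integral_integral_swap hF]
  refine setIntegral_congr_fun measurableSet_Icc fun t _ => ?_
  have h : ∀ s : ℝ, Real.exp (-(s * (c - t) ^ 2)) * (lam * Real.exp (-lam * s))
      = lam * Real.exp (-(((c - t) ^ 2 + lam) * s)) := by
    intro s
    rw [mul_left_comm, ← Real.exp_add]
    congr 1
    ring
  simp_rw [h]
  have hc2 : 0 < (c - t) ^ 2 + lam := by positivity
  rw [MeasureTheory.integral_const_mul, exp_int hc2]
  field_simp

theorem expect_gamma_Y {p : ℕ} {lam : ℝ} (hlam : 0 < lam) (a : Fin p → ℝ) :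
    ∫ θ in Set.univ.pi (fun _ : Fin p => Set.Ioi (0:ℝ)),
        (∫ y in Set.univ.pi (fun _ : Fin p => Set.Icc (0:ℝ) 1), gammaKer θ a y) * expDens lam θ
      = ∏ l, (Real.sqrt lam * phiCorr lam (a l)) := by
  have hin : ∀ θ : Fin p → ℝ,
      (∫ y in Set.univ.pi (fun _ : Fin p => Set.Icc (0:ℝ) 1), gammaKer θ a y)
        = ∏ l, ∫ t in Set.Icc (0:ℝ) 1, Real.exp (-(θ l * (a l - t) ^ 2)) := by
    intro θ
    have h : ∀ y : Fin p → ℝ, gammaKer θ a y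
        = ∏ l, Real.exp (-(θ l * (a l - y l) ^ 2)) := by
      intro y
      unfold gammaKer
      rw [← Finset.sum_neg_distrib, Real.exp_sum]
    simp_rw [h]
    exact integral_pi_set_prod _ (fun _ => measurableSet_Icc)
      (fun l t => Real.exp (-(θ l * (a l - t) ^ 2)))
  have key : ∀ θ : Fin p → ℝ,
      (∫ y in Set.univ.pi (fun _ : Fin p => Set.Icc (0:ℝ) 1), gammaKer θ a y) * expDens lam θ
        = ∏ l, ((∫ t in Set.Icc (0:ℝ) 1, Real.exp (-(θ l * (a l - t) ^ 2)))
            * (lam * Real.exp (-lam * θ l))) := by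
    intro θ
    rw [hin θ, expDens, ← Finset.prod_mul_distrib]
  simp_rw [key]
  rw [integral_pi_set_prod _ (fun _ => measurableSet_Ioi)
    (fun l s => (∫ t in Set.Icc (0:ℝ) 1, Real.exp (-(s * (a l - t) ^ 2)))
      * (lam * Real.exp (-lam * s)))]
  exact Finset.prod_congr rfl fun l _ => by rw [oneD_y hlam (a l), phi_int hlam (a l)]

theorem double_sum_split {n : ℕ} (F : Fin n → Fin n → ℝ) (hsym : ∀ i j, F i j = F j i) :
    ∑ i, ∑ j, F i j
      = 2 * (∑ i, ∑ j ∈ Finset.univ.filter (fun j => i < j), F i j) + ∑ i, F i i := by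
  have h1 : ∀ i : Fin n, ∑ j, F i j
      = (∑ j ∈ Finset.univ.filter (fun j => i < j), F i j)
        + ((∑ j ∈ Finset.univ.filter (fun j => j < i), F i j) + F i i) := by
    intro i
    rw [← Finset.sum_filter_add_sum_filter_not Finset.univ (fun j => i < j) (F i)]
    congr 1
    rw [← Finset.sum_filter_add_sum_filter_not
      (Finset.univ.filter (fun j => ¬ i < j)) (fun j => j < i) (F i)]
    congr 1
    · rw [Finset.filter_filter]
      congr 1
      ext j
      simp only [Finset.mem_filter, Finset.mem_univ, true_and]
      omega
    · have : (Finset.univ.filter (fun j => ¬ i < j)).filter (fun j => ¬ j < i) = {i} := by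
        ext j
        simp only [Finset.mem_filter, Finset.mem_univ, true_and, Finset.mem_singleton]
        omega
      rw [this, Finset.sum_singleton]
  simp_rw [h1]
  rw [Finset.sum_add_distrib, Finset.sum_add_distrib]
  have h2 : ∑ i, ∑ j ∈ Finset.univ.filter (fun j => j < i), F i j
      = ∑ i, ∑ j ∈ Finset.univ.filter (fun j => i < j), F i j := by
    rw [Finset.sum_comm' (t' := Finset.univ)
      (s' := fun j => Finset.univ.filter (fun i => j < i)) (by simp)]
    exact Finset.sum_congr rfl fun j _ => Finset.sum_congr rfl fun i _ => hsym i j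
  rw [h2]
  ring

end Aux

/-- For a design `{x₁,…,xₙ} ⊆ [0,1]^p`, `θ` with i.i.d. `Exponential(λ)` coordinates and
`Y` uniform on `[0,1]^p` independent of `θ`, the projected-support-point criterion
`−(2/n) Σᵢ E[γ_θ(xᵢ,Y)] + (1/n²) ΣᵢΣⱼ E[γ_θ(xᵢ,xⱼ)]` equals
`(2λ^p/n²) [ MaxPro(D;λ) − (n/λ^{p/2}) Σᵢ Π_l φ(x_{i,l};λ) + n/(2λ^p) ]`. -/
theorem psp_criterion_eq_maxpro_adjusted (n p : ℕ) (hn : 0 < n) (lam : ℝ) (hlam : 0 < lam)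
    (x : Fin n → Fin p → ℝ) (hx : ∀ i l, x i l ∈ Set.Icc (0 : ℝ) 1) :
    -(2 / (n : ℝ)) * ∑ i,
        (∫ θ in Set.univ.pi fun _ : Fin p => Set.Ioi (0 : ℝ),
          ((∫ y in Set.univ.pi fun _ : Fin p => Set.Icc (0 : ℝ) 1, gammaKer θ (x i) y)
            * expDens lam θ))
      + (1 / (n : ℝ) ^ 2) * ∑ i, ∑ j,
        (∫ θ in Set.univ.pi fun _ : Fin p => Set.Ioi (0 : ℝ),
          gammaKer θ (x i) (x j) * expDens lam θ)
    = (2 * lam ^ p / (n : ℝ) ^ 2) *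
        (maxPro lam x
          - ((n : ℝ) / Real.sqrt lam ^ p) * ∑ i, ∏ l, phiCorr lam (x i l)
          + (n : ℝ) / (2 * lam ^ p)) := by
  have hr : (0:ℝ) < Real.sqrt lam ^ p := pow_pos (Real.sqrt_pos.2 hlam) p
  have hrsq : (Real.sqrt lam ^ p) ^ 2 = lam ^ p := by
    rw [← pow_mul, mul_comm, pow_mul, Real.sq_sqrt hlam.le]
  have hQ : ∀ i j : Fin n, (0:ℝ) < ∏ l, ((x i l - x j l) ^ 2 + lam) :=
    fun i j => Finset.prod_pos fun l _ => by positivity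
  -- first sum
  have h1 : ∀ i : Fin n,
      (∫ θ in Set.univ.pi fun _ : Fin p => Set.Ioi (0 : ℝ),
        ((∫ y in Set.univ.pi fun _ : Fin p => Set.Icc (0 : ℝ) 1, gammaKer θ (x i) y)
          * expDens lam θ))
      = Real.sqrt lam ^ p * ∏ l, phiCorr lam (x i l) := by
    intro i
    rw [expect_gamma_Y hlam (x i), Finset.prod_mul_distrib, Finset.prod_const,
      Finset.card_univ, Fintype.card_fin]
  -- second sum
  have h2 : ∀ i j : Fin n,
      (∫ θ in Set.univ.pi fun _ : Fin p => Set.Ioi (0 : ℝ),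
        gammaKer θ (x i) (x j) * expDens lam θ)
      = lam ^ p * (1 / ∏ l, ((x i l - x j l) ^ 2 + lam)) := by
    intro i j
    rw [expect_gamma hlam (x i) (x j), Finset.prod_div_distrib, Finset.prod_const,
      Finset.card_univ, Fintype.card_fin, div_eq_mul_one_div]
  simp_rw [h1, h2]
  rw [← Finset.mul_sum]
  have h3 : ∑ i, ∑ j, lam ^ p * (1 / ∏ l, ((x i l - x j l) ^ 2 + lam))
      = lam ^ p * (2 * maxPro lam x + (n : ℝ) * (1 / lam ^ p)) := by
    simp_rw [← Finset.mul_sum]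
    congr 1
    rw [double_sum_split (fun i j => 1 / ∏ l, ((x i l - x j l) ^ 2 + lam))
      (fun i j => by
        show (1:ℝ) / ∏ l, ((x i l - x j l) ^ 2 + lam) = 1 / ∏ l, ((x j l - x i l) ^ 2 + lam)
        rw [show (∏ l, ((x i l - x j l) ^ 2 + lam)) = ∏ l, ((x j l - x i l) ^ 2 + lam)
          from Finset.prod_congr rfl fun l _ => by ring])]
    rw [maxPro]
    congr 1
    have : ∀ i : Fin n, (1:ℝ) / ∏ l, ((x i l - x i l) ^ 2 + lam) = 1 / lam ^ p := by
      intro i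
      congr 1
      simp
    simp_rw [this]
    rw [Finset.sum_const, Finset.card_univ, Fintype.card_fin, nsmul_eq_mul]
  rw [h3]
  have hnR : (0:ℝ) < (n:ℝ) := Nat.cast_pos.2 hn
  have hlp : (0:ℝ) < lam ^ p := pow_pos hlam p
  set S := ∑ i, ∏ l, phiCorr lam (x i l)
  set M := maxPro lam x
  set r := Real.sqrt lam ^ p
  rw [show lam ^ p = r ^ 2 from hrsq.symm]
  field_simp
  ring
end

section
/- The function k(x,y) = ‖x‖₂ + ‖y‖₂ − ‖x−y‖₂ on ℝ^p × ℝ^p is a positive semi-definite kernel: for any points x₁,…,xₙ ∈ ℝ^p and real coefficients c₁,…,cₙ, Σᵢ Σⱼ cᵢ cⱼ k(xᵢ,xⱼ) ≥ 0. -/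
open Finset MeasureTheory Set

lemma gram_nonneg {n : ℕ} {κ : Type*} [Fintype κ] (g : Fin n → κ → ℝ) (d : Fin n → ℝ) :
    0 ≤ ∑ i, ∑ j, d i * d j * ∑ a, g i a * g j a := by
  have key : ∑ a, (∑ i, d i * g i a) ^ 2 = ∑ i, ∑ j, d i * d j * ∑ a, g i a * g j a := by
    simp_rw [sq, Finset.sum_mul_sum, Finset.mul_sum]
    rw [Finset.sum_comm]
    refine Finset.sum_congr rfl fun i _ => ?_
    rw [Finset.sum_comm]
    exact Finset.sum_congr rfl fun j _ => Finset.sum_congr rfl fun a _ => by ring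
  rw [← key]
  exact Finset.sum_nonneg fun a _ => sq_nonneg _

lemma inner_pow_nonneg {n p : ℕ} (y : Fin n → EuclideanSpace ℝ (Fin p)) (d : Fin n → ℝ) (k : ℕ) :
    0 ≤ ∑ i, ∑ j, d i * d j * (inner ℝ (y i) (y j) : ℝ) ^ k := by
  have h : ∀ i j, (inner ℝ (y i) (y j) : ℝ) ^ k
      = ∑ f : Fin k → Fin p, (∏ m, y i (f m)) * (∏ m, y j (f m)) := by
    intro i j
    rw [PiLp.inner_apply]
    simp_rw [RCLike.inner_apply, conj_trivial]
    rw [Fintype.sum_pow]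
    exact Finset.sum_congr rfl fun f _ => Finset.prod_mul_distrib.trans (mul_comm _ _)
  have H := gram_nonneg (fun (i : Fin n) (f : Fin k → Fin p) => ∏ m, y i (f m)) d
  refine le_of_le_of_eq H ?_
  exact Finset.sum_congr rfl fun i _ => Finset.sum_congr rfl fun j _ => by rw [h i j]

lemma exp_inner_nonneg {n p : ℕ} (y : Fin n → EuclideanSpace ℝ (Fin p)) (d : Fin n → ℝ)
    {r : ℝ} (hr : 0 ≤ r) :
    0 ≤ ∑ i, ∑ j, d i * d j * Real.exp (r * (inner ℝ (y i) (y j) : ℝ)) := by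
  have hexp : ∀ x : ℝ, Real.exp x = ∑' k : ℕ, x ^ k / k.factorial := fun x => by
    rw [Real.exp_eq_exp_ℝ, NormedSpace.exp_eq_tsum_div]
  have hsum : ∀ (u v : ℝ), Summable (fun k : ℕ => u * ((r * v) ^ k / k.factorial)) :=
    fun u v => (Real.summable_pow_div_factorial (r * v)).mul_left u
  have key : ∑ i, ∑ j, d i * d j * Real.exp (r * (inner ℝ (y i) (y j) : ℝ))
      = ∑' k : ℕ, ∑ i, ∑ j, d i * d j * ((r * (inner ℝ (y i) (y j) : ℝ)) ^ k / k.factorial) := by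
    calc ∑ i, ∑ j, d i * d j * Real.exp (r * (inner ℝ (y i) (y j) : ℝ))
        = ∑ i, ∑ j, ∑' k : ℕ, d i * d j * ((r * (inner ℝ (y i) (y j) : ℝ)) ^ k / k.factorial) := by
          refine Finset.sum_congr rfl fun i _ => Finset.sum_congr rfl fun j _ => ?_
          rw [hexp, ← tsum_mul_left]
      _ = ∑ i, ∑' k : ℕ, ∑ j, d i * d j * ((r * (inner ℝ (y i) (y j) : ℝ)) ^ k / k.factorial) :=
          Finset.sum_congr rfl fun i _ => (Summable.tsum_finsetSum fun j _ => hsum _ _).symm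
      _ = ∑' k : ℕ, ∑ i, ∑ j, d i * d j * ((r * (inner ℝ (y i) (y j) : ℝ)) ^ k / k.factorial) :=
          (Summable.tsum_finsetSum fun i _ => summable_sum fun j _ => hsum _ _).symm
  rw [key]
  refine tsum_nonneg fun k => ?_
  have : ∑ i, ∑ j, d i * d j * ((r * (inner ℝ (y i) (y j) : ℝ)) ^ k / k.factorial)
      = (r ^ k / k.factorial) * ∑ i, ∑ j, d i * d j * (inner ℝ (y i) (y j) : ℝ) ^ k := by
    rw [Finset.mul_sum]
    refine Finset.sum_congr rfl fun i _ => ?_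
    rw [Finset.mul_sum]
    refine Finset.sum_congr rfl fun j _ => ?_
    rw [mul_pow]; ring
  rw [this]
  exact mul_nonneg (div_nonneg (pow_nonneg hr _) (Nat.cast_nonneg _)) (inner_pow_nonneg y d k)

lemma gauss_kernel_nonneg {n p : ℕ} (y : Fin n → EuclideanSpace ℝ (Fin p)) (d : Fin n → ℝ)
    {t : ℝ} (ht : 0 ≤ t) :
    0 ≤ ∑ i, ∑ j, d i * d j * Real.exp (-(t * ‖y i - y j‖ ^ 2)) := by
  have key : ∑ i, ∑ j, d i * d j * Real.exp (-(t * ‖y i - y j‖ ^ 2))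
      = ∑ i, ∑ j, (d i * Real.exp (-(t * ‖y i‖ ^ 2))) * (d j * Real.exp (-(t * ‖y j‖ ^ 2)))
          * Real.exp ((2 * t) * (inner ℝ (y i) (y j) : ℝ)) := by
    refine Finset.sum_congr rfl fun i _ => Finset.sum_congr rfl fun j _ => ?_
    have hn : ‖y i - y j‖ ^ 2 = ‖y i‖ ^ 2 - 2 * (inner ℝ (y i) (y j) : ℝ) + ‖y j‖ ^ 2 :=
      norm_sub_sq_real _ _
    rw [hn, show -(t * (‖y i‖ ^ 2 - 2 * (inner ℝ (y i) (y j) : ℝ) + ‖y j‖ ^ 2))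
        = -(t * ‖y i‖ ^ 2) + (-(t * ‖y j‖ ^ 2) + (2 * t) * (inner ℝ (y i) (y j) : ℝ)) by ring,
      Real.exp_add, Real.exp_add]
    ring
  rw [key]
  exact exp_inner_nonneg y (fun i => d i * Real.exp (-(t * ‖y i‖ ^ 2))) (by linarith)

lemma gaussG_nonneg {n p : ℕ} (x : Fin n → EuclideanSpace ℝ (Fin p)) (c : Fin n → ℝ)
    {t : ℝ} (ht : 0 ≤ t) :
    0 ≤ ∑ i, ∑ j, c i * c j * (Real.exp (-(t * ‖x i - x j‖ ^ 2))
        - Real.exp (-(t * ‖x i‖ ^ 2)) - Real.exp (-(t * ‖x j‖ ^ 2)) + 1) := by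
  set s := ∑ i, c i with hs
  set E : EuclideanSpace ℝ (Fin p) → ℝ := fun z => Real.exp (-(t * ‖z‖ ^ 2)) with hE
  have H := gauss_kernel_nonneg (Fin.cons 0 x) (Fin.cons (-s) c) ht
  refine le_of_le_of_eq H ?_
  rw [Fin.sum_univ_succ]
  simp only [Fin.cons_zero, Fin.cons_succ]
  rw [Fin.sum_univ_succ]
  simp only [Fin.cons_zero, Fin.cons_succ]
  have e00 : Real.exp (-(t * ‖(0 : EuclideanSpace ℝ (Fin p)) - 0‖ ^ 2)) = 1 := by
    simp [Real.exp_zero]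
  have e0j : ∀ j, Real.exp (-(t * ‖(0 : EuclideanSpace ℝ (Fin p)) - x j‖ ^ 2)) = E (x j) := by
    intro j; rw [zero_sub, norm_neg]
  have ei0 : ∀ i, Real.exp (-(t * ‖x i - (0 : EuclideanSpace ℝ (Fin p))‖ ^ 2)) = E (x i) := by
    intro i; rw [sub_zero]
  rw [e00]
  simp only [e0j, ei0]
  simp only [show ∀ z, Real.exp (-(t * ‖z‖ ^ 2)) = E z from fun z => rfl]
  have hrow : ∀ i : Fin n, (∑ j : Fin (n + 1), c i * (Fin.cons (-s) c : Fin (n+1) → ℝ) j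
        * E (x i - (Fin.cons 0 x : Fin (n+1) → EuclideanSpace ℝ (Fin p)) j))
      = c i * -s * E (x i) + ∑ j, c i * c j * E (x i - x j) := by
    intro i
    rw [Fin.sum_univ_succ]
    simp only [Fin.cons_zero, Fin.cons_succ, sub_zero]
  simp only [hrow]
  have expand : ∀ i, ∑ j, c i * c j * (E (x i - x j) - E (x i) - E (x j) + 1)
      = (∑ j, c i * c j * E (x i - x j))
        - c i * E (x i) * s - c i * (∑ j, c j * E (x j)) + c i * s := by
    intro i
    rw [hs, Finset.mul_sum, Finset.mul_sum, Finset.mul_sum]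
    rw [← Finset.sum_sub_distrib, ← Finset.sum_sub_distrib, ← Finset.sum_add_distrib]
    exact Finset.sum_congr rfl fun j _ => by ring
  simp only [expand]
  simp only [Finset.sum_add_distrib, Finset.sum_sub_distrib]
  have ha : ∑ i : Fin n, -s * c i * E (x i) = -s * ∑ i, c i * E (x i) := by
    rw [Finset.mul_sum]
    refine Finset.sum_congr rfl fun i _ => ?_
    ring
  have hb : ∑ i : Fin n, c i * -s * E (x i) = -s * ∑ i, c i * E (x i) := by
    rw [Finset.mul_sum]
    refine Finset.sum_congr rfl fun i _ => ?_
    ring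
  have hc : ∑ i : Fin n, c i * E (x i) * s = s * ∑ i, c i * E (x i) := by
    rw [Finset.mul_sum]
    refine Finset.sum_congr rfl fun i _ => ?_
    ring
  have hd : ∑ i : Fin n, c i * ∑ j, c j * E (x j) = s * ∑ i, c i * E (x i) := by
    rw [← Finset.sum_mul, ← hs]
  have he : ∑ i : Fin n, c i * s = s * s := by
    rw [← Finset.sum_mul, ← hs]
  rw [ha, hb, hc, hd, he]
  ring

lemma bm_integrableOn (a : ℝ) :
    IntegrableOn (fun t : ℝ => (1 - Real.exp (-(t * a ^ 2))) * t ^ (-(3:ℝ)/2))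
      (Set.Ioi 0) := by
  have hmeas : AEStronglyMeasurable
      (fun t : ℝ => (1 - Real.exp (-(t * a ^ 2))) * t ^ (-(3:ℝ)/2)) (volume.restrict (Ioi 0)) := by
    refine ContinuousOn.aestronglyMeasurable ?_ measurableSet_Ioi
    refine ContinuousOn.mul ?_ (continuousOn_id.rpow_const fun x hx => Or.inl (ne_of_gt hx))
    exact (Continuous.continuousOn (by continuity))
  have key1 : ∀ t : ℝ, 0 < t → 0 ≤ 1 - Real.exp (-(t * a ^ 2)) := by
    intro t ht
    have : Real.exp (-(t * a ^ 2)) ≤ 1 := Real.exp_le_one_iff.mpr (by nlinarith)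
    linarith
  have key2 : ∀ t : ℝ, 1 - Real.exp (-(t * a ^ 2)) ≤ 1 := by
    intro t
    have := Real.exp_pos (-(t * a ^ 2))
    linarith
  rw [← Set.Ioc_union_Ioi_eq_Ioi (zero_le_one' ℝ), integrableOn_union]
  constructor
  · -- on Ioc 0 1, dominate by a^2 * t^(-1/2)
    have hbound : IntegrableOn (fun t : ℝ => a ^ 2 * t ^ (-(1:ℝ)/2)) (Ioc 0 1) := by
      rw [integrableOn_Ioc_iff_integrableOn_Ioo]
      exact ((intervalIntegral.integrableOn_Ioo_rpow_iff zero_lt_one).mpr (by norm_num)).const_mul _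
    refine Integrable.mono hbound (hmeas.mono_measure
      (Measure.restrict_mono Set.Ioc_subset_Ioi_self le_rfl)) ?_
    refine (ae_restrict_iff' measurableSet_Ioc).mpr (Filter.Eventually.of_forall ?_)
    intro t ht
    have ht0 : 0 < t := ht.1
    rw [Real.norm_eq_abs, Real.norm_eq_abs, abs_of_nonneg
      (mul_nonneg (key1 t ht0) (Real.rpow_nonneg ht0.le _)),
      abs_of_nonneg (mul_nonneg (sq_nonneg a) (Real.rpow_nonneg ht0.le _))]
    have h1 : 1 - Real.exp (-(t * a ^ 2)) ≤ t * a ^ 2 := by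
      have := Real.add_one_le_exp (-(t * a ^ 2))
      linarith
    calc (1 - Real.exp (-(t * a ^ 2))) * t ^ (-(3:ℝ)/2)
        ≤ (t * a ^ 2) * t ^ (-(3:ℝ)/2) :=
          mul_le_mul_of_nonneg_right h1 (Real.rpow_nonneg ht0.le _)
      _ = a ^ 2 * (t * t ^ (-(3:ℝ)/2)) := by ring
      _ = a ^ 2 * t ^ (-(1:ℝ)/2) := by
          congr 1
          rw [show (t : ℝ) * t ^ (-(3:ℝ)/2) = t ^ (1:ℝ) * t ^ (-(3:ℝ)/2) by rw [Real.rpow_one],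
            ← Real.rpow_add ht0]
          norm_num
  · -- on Ioi 1, dominate by t^(-3/2)
    have hbound : IntegrableOn (fun t : ℝ => t ^ (-(3:ℝ)/2)) (Ioi 1) :=
      integrableOn_Ioi_rpow_of_lt (by norm_num) zero_lt_one
    refine Integrable.mono hbound (hmeas.mono_measure
      (Measure.restrict_mono (Set.Ioi_subset_Ioi zero_le_one) le_rfl)) ?_
    refine (ae_restrict_iff' measurableSet_Ioi).mpr (Filter.Eventually.of_forall ?_)
    intro t ht
    have ht0 : (0:ℝ) < t := lt_trans zero_lt_one ht
    rw [Real.norm_eq_abs, Real.norm_eq_abs, abs_of_nonneg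
      (mul_nonneg (key1 t ht0) (Real.rpow_nonneg ht0.le _)),
      abs_of_nonneg (Real.rpow_nonneg ht0.le _)]
    nlinarith [Real.rpow_nonneg ht0.le (-(3:ℝ)/2), key1 t ht0, key2 t]

lemma bm_scale {a : ℝ} (ha : 0 ≤ a) :
    ∫ t in Ioi (0:ℝ), (1 - Real.exp (-(t * a ^ 2))) * t ^ (-(3:ℝ)/2)
      = a * ∫ s in Ioi (0:ℝ), (1 - Real.exp (-(s * 1 ^ 2))) * s ^ (-(3:ℝ)/2) := by
  rcases eq_or_lt_of_le ha with rfl | ha'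
  · simp
  · have hb : (0:ℝ) < a ^ 2 := by positivity
    have h1 := MeasureTheory.integral_comp_mul_left_Ioi
      (fun s => (1 - Real.exp (-(s * 1 ^ 2))) * s ^ (-(3:ℝ)/2)) 0 hb
    rw [mul_zero] at h1
    have h2 : ∫ t in Ioi (0:ℝ), (1 - Real.exp (-(a ^ 2 * t * 1 ^ 2))) * (a ^ 2 * t) ^ (-(3:ℝ)/2)
        = (a ^ 2) ^ (-(3:ℝ)/2) * ∫ t in Ioi (0:ℝ),
            (1 - Real.exp (-(t * a ^ 2))) * t ^ (-(3:ℝ)/2) := by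
      rw [← integral_const_mul]
      refine setIntegral_congr_fun measurableSet_Ioi fun t ht => ?_
      rw [Real.mul_rpow hb.le (le_of_lt ht), one_pow, mul_one]
      ring_nf
    rw [h2, smul_eq_mul] at h1
    have hpow : (a ^ 2) ^ (-(3:ℝ)/2) = (a ^ 3)⁻¹ := by
      rw [← Real.rpow_two, ← Real.rpow_mul ha,
        show (2:ℝ) * ((-(3:ℝ))/2) = -(3:ℝ) by norm_num, Real.rpow_neg ha,
        show ((3:ℝ)) = ((3:ℕ):ℝ) by norm_num, Real.rpow_natCast]
    rw [hpow] at h1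
    have ha0 : a ≠ 0 := ne_of_gt ha'
    have h3 := congrArg (fun z => a ^ 3 * z) h1
    rw [← mul_assoc, mul_inv_cancel₀ (by positivity : (a:ℝ)^3 ≠ 0), one_mul] at h3
    rw [h3, ← mul_assoc]
    congr 1
    field_simp

lemma bm_C_pos :
    0 < ∫ s in Ioi (0:ℝ), (1 - Real.exp (-(s * 1 ^ 2))) * s ^ (-(3:ℝ)/2) := by
  have hint : IntegrableOn (fun s : ℝ => (1 - Real.exp (-(s * 1 ^ 2))) * s ^ (-(3:ℝ)/2))
      (Ioi 0) := bm_integrableOn 1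
  have hnonneg : 0 ≤ᵐ[volume.restrict (Ioi (0:ℝ))]
      fun s : ℝ => (1 - Real.exp (-(s * 1 ^ 2))) * s ^ (-(3:ℝ)/2) := by
    refine (ae_restrict_iff' measurableSet_Ioi).mpr (Filter.Eventually.of_forall ?_)
    intro s hs
    have h1 : Real.exp (-(s * 1 ^ 2)) ≤ 1 := Real.exp_le_one_iff.mpr (by simp; linarith [mem_Ioi.mp hs])
    exact mul_nonneg (by linarith) (Real.rpow_nonneg (le_of_lt (mem_Ioi.mp hs)) _)
  rw [setIntegral_pos_iff_support_of_nonneg_ae hnonneg hint]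
  have hsub : Ioi (0:ℝ) ⊆ Function.support
      (fun s : ℝ => (1 - Real.exp (-(s * 1 ^ 2))) * s ^ (-(3:ℝ)/2)) := by
    intro s hs
    have hs0 : (0:ℝ) < s := hs
    have h1 : Real.exp (-(s * 1 ^ 2)) < 1 := by
      rw [Real.exp_lt_one_iff]
      simp; linarith
    have h2 : (0:ℝ) < s ^ (-(3:ℝ)/2) := Real.rpow_pos_of_pos hs0 _
    exact ne_of_gt (mul_pos (by linarith) h2)
  have : (0:ENNReal) < volume (Ioi (0:ℝ)) := by simp [Real.volume_Ioi]
  calc (0:ENNReal) < volume (Ioi (0:ℝ)) := this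
    _ ≤ volume (Function.support
        (fun s : ℝ => (1 - Real.exp (-(s * 1 ^ 2))) * s ^ (-(3:ℝ)/2)) ∩ Ioi 0) :=
      measure_mono (subset_inter hsub (subset_refl _))

/-- The kernel `k(x,y) = ‖x‖ + ‖y‖ − ‖x−y‖` on `ℝ^p × ℝ^p` is positive semi-definite:
for any points `x₁,…,xₙ` and real coefficients `c₁,…,cₙ`,
`Σᵢ Σⱼ cᵢ cⱼ k(xᵢ,xⱼ) ≥ 0`. -/
theorem bm_kernel_posSemidef (p n : ℕ)
    (x : Fin n → EuclideanSpace ℝ (Fin p)) (c : Fin n → ℝ) :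
    0 ≤ ∑ i, ∑ j, c i * c j * (‖x i‖ + ‖x j‖ - ‖x i - x j‖) := by
  set C : ℝ := ∫ s in Ioi (0:ℝ), (1 - Real.exp (-(s * 1 ^ 2))) * s ^ (-(3:ℝ)/2) with hCdef
  have hCpos : 0 < C := bm_C_pos
  set f : ℝ → ℝ → ℝ := fun a t => (1 - Real.exp (-(t * a ^ 2))) * t ^ (-(3:ℝ)/2) with hf
  have hint : ∀ a : ℝ, IntegrableOn (f a) (Ioi 0) := bm_integrableOn
  have hval : ∀ z : EuclideanSpace ℝ (Fin p),
      ∫ t in Ioi (0:ℝ), f ‖z‖ t = ‖z‖ * C := fun z => bm_scale (norm_nonneg z)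
  set g : Fin n → Fin n → ℝ → ℝ := fun i j t =>
    c i * c j * (f ‖x i‖ t + f ‖x j‖ t - f ‖x i - x j‖ t) with hg
  have hgint : ∀ i j, IntegrableOn (g i j) (Ioi 0) := by
    intro i j
    exact (((hint ‖x i‖).add (hint ‖x j‖)).sub (hint ‖x i - x j‖)).const_mul _
  have key : ∫ t in Ioi (0:ℝ), ∑ i, ∑ j, g i j t
      = C * ∑ i, ∑ j, c i * c j * (‖x i‖ + ‖x j‖ - ‖x i - x j‖) := by
    rw [integral_finset_sum _ fun i _ => integrable_finset_sum _ fun j _ => hgint i j]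
    rw [Finset.mul_sum]
    refine Finset.sum_congr rfl fun i _ => ?_
    rw [integral_finset_sum _ fun j _ => hgint i j, Finset.mul_sum]
    refine Finset.sum_congr rfl fun j _ => ?_
    have : ∫ t in Ioi (0:ℝ), g i j t
        = c i * c j * ((∫ t in Ioi (0:ℝ), f ‖x i‖ t) + (∫ t in Ioi (0:ℝ), f ‖x j‖ t)
            - ∫ t in Ioi (0:ℝ), f ‖x i - x j‖ t) := by
      rw [hg]
      simp only
      have h1 : IntegrableOn (fun t => f ‖x i‖ t + f ‖x j‖ t) (Ioi 0) :=
        (hint ‖x i‖).add (hint ‖x j‖)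
      rw [integral_const_mul, integral_sub h1 (hint ‖x i - x j‖),
        integral_add (hint ‖x i‖) (hint ‖x j‖)]
    rw [this, hval, hval, hval]
    ring
  have hpos : 0 ≤ ∫ t in Ioi (0:ℝ), ∑ i, ∑ j, g i j t := by
    refine setIntegral_nonneg measurableSet_Ioi fun t ht => ?_
    have ht0 : (0:ℝ) < t := ht
    have hfact : ∑ i, ∑ j, g i j t
        = (∑ i, ∑ j, c i * c j * (Real.exp (-(t * ‖x i - x j‖ ^ 2))
            - Real.exp (-(t * ‖x i‖ ^ 2)) - Real.exp (-(t * ‖x j‖ ^ 2)) + 1)) * t ^ (-(3:ℝ)/2) := by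
      rw [Finset.sum_mul]
      refine Finset.sum_congr rfl fun i _ => ?_
      rw [Finset.sum_mul]
      refine Finset.sum_congr rfl fun j _ => ?_
      rw [hg, hf]
      simp only
      ring
    rw [hfact]
    exact mul_nonneg (gaussG_nonneg x c ht0.le) (Real.rpow_nonneg ht0.le _)
  rw [key] at hpos
  by_contra h
  push_neg at h
  nlinarith
end
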